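/- Let A be a k-algebra and G a finite group acting on A by automorphisms. For each g ∈ G, the map ξ_g: C_•(A; A_g) → C_•(A⋊G) sending a_0 ⊗ a_1 ⊗ ⋯ ⊗ a_m to ((1, g^{-1})·(a_0, 1)) ⊗ (a_1, 1) ⊗ ⋯ ⊗ (a_m, 1) is a chain map, i.e. it commutes with the Hochschild differentials, including the cyclic boundary term. -/

import Mathlib

open scoped TensorProduct
open PiTensorProduct

section

variable (k : Type) [CommRing k] (A : Type) [Ring A] [Algebra k A]
variable (G : Type) [Group G] [Fintype G] [DecidableEq G]
variable (act : G →* (A ≃ₐ[k] A))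

/-- The Hochschild-type differential evaluated on an elementary `(m+1)`-tuple:
the alternating sum of the face maps (merging adjacent entries using the
multiplication `mulB`) together with the cyclic face, in which the last entry
is first twisted by `tw` and then multiplied onto the zeroth entry. -/
noncomputable def tupleD {B : Type} [AddCommGroup B] [Module k B]
    (mulB : B → B → B) (tw : B → B) {m : ℕ} (v : Fin (m + 1) → B) :
    ⨂[k]^m B :=
  (∑ i : Fin m, ((-1 : ℤ) ^ (i : ℕ)) •
      tprod k (fun j : Fin m =>
        if (j : ℕ) < (i : ℕ) then v (Fin.castSucc j)
        else if (j : ℕ) = (i : ℕ) then mulB (v (Fin.castSucc j)) (v (Fin.succ j))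
        else v (Fin.succ j)))
  + ((-1 : ℤ) ^ m) •
      tprod k (fun j : Fin m =>
        if (j : ℕ) = 0 then mulB (tw (v (Fin.last m))) (v 0)
        else v (Fin.castSucc j))

/-- The crossed product `A ⋊ G`, realized as the `k`-module of `A`-valued
functions on `G` (`(a, g)` corresponds to the function `δ_g·a`). -/
abbrev CP : Type := G → A

/-- Multiplication of the crossed product `A ⋊ G`:
`(a, g)·(b, h) = (a·g(b), gh)`, extended bilinearly. -/
def cpMul (x y : CP A G) : CP A G :=
  fun h => ∑ p ∈ Finset.univ.filter (fun p : G × G => p.1 * p.2 = h),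
    x p.1 * act p.1 (y p.2)

/-- The elementary element `(a, g)` of the crossed product `A ⋊ G`. -/
def cpOf (a : A) (g : G) : CP A G := fun h => if h = g then a else 0

/-- The map `ξ_g` on an elementary `g`-twisted Hochschild chain:
`a_0 ⊗ a_1 ⊗ ⋯ ⊗ a_m ↦ ((1, g⁻¹)·(a_0, 1)) ⊗ (a_1, 1) ⊗ ⋯ ⊗ (a_m, 1)`,
where `(1, g⁻¹)·(a_0, 1) = (g⁻¹(a_0), g⁻¹)`. -/
def xiTup (g : G) {m : ℕ} (a : Fin (m + 1) → A) : Fin (m + 1) → CP A G :=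
  fun j => if (j : ℕ) = 0 then cpOf A G (act g⁻¹ (a 0)) g⁻¹ else cpOf A G (a j) 1

/-- The `i`-th face of an elementary `g`-twisted chain of `A`. -/
def twFace {m : ℕ} (i : Fin (m + 1)) (a : Fin (m + 2) → A) : Fin (m + 1) → A :=
  fun j =>
    if (j : ℕ) < (i : ℕ) then a (Fin.castSucc j)
    else if (j : ℕ) = (i : ℕ) then a (Fin.castSucc j) * a (Fin.succ j)
    else a (Fin.succ j)

/-- The cyclic face of an elementary `g`-twisted chain of `A`:
`a_0 ⊗ ⋯ ⊗ a_{m+1} ↦ (g(a_{m+1})·a_0) ⊗ a_1 ⊗ ⋯ ⊗ a_m`. -/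
def twCyc (g : G) {m : ℕ} (a : Fin (m + 2) → A) : Fin (m + 1) → A :=
  fun j =>
    if (j : ℕ) = 0 then act g (a (Fin.last (m + 1))) * a 0
    else a (Fin.castSucc j)

lemma cpMul_cpOf (a b : A) (g h : G) :
    cpMul k A G act (cpOf A G a g) (cpOf A G b h) = cpOf A G (a * act g b) (g * h) := by
  funext x
  simp only [cpMul, cpOf]
  by_cases hx : g * h = x
  · rw [Finset.sum_eq_single (g, h)]
    · simp [← hx]
    · rintro ⟨p, q⟩ hp hne
      simp only [Finset.mem_filter, Finset.mem_univ, true_and] at hp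
      by_cases hpg : p = g
      · subst hpg
        have : q = h := by
          have := hp.trans hx.symm
          exact mul_left_cancel this
        exact absurd (by simp [this]) hne
      · simp [hpg]
    · intro hmem
      exact absurd (by simp [hx]) hmem
  · rw [Finset.sum_eq_zero, if_neg (fun h' => hx h'.symm)]
    rintro ⟨p, q⟩ hp
    simp only [Finset.mem_filter, Finset.mem_univ, true_and] at hp
    by_cases hpg : p = g
    · subst hpg
      have hq : q ≠ h := fun h' => hx (h' ▸ hp)
      simp [hq]
    · simp [hpg]

lemma xiTup_twFace (g : G) (m : ℕ) (a : Fin (m + 2) → A) (i : Fin (m+1)) :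
    (xiTup k A G act g (twFace A i a)) = (fun j : Fin (m+1) =>
        if (j : ℕ) < (i : ℕ) then xiTup k A G act g a (Fin.castSucc j)
        else if (j : ℕ) = (i : ℕ) then cpMul k A G act (xiTup k A G act g a (Fin.castSucc j)) (xiTup k A G act g a (Fin.succ j))
        else xiTup k A G act g a (Fin.succ j)) := by
  funext j
  rcases eq_or_ne (j : ℕ) 0 with hj | hj
  · have hj0 : j = 0 := Fin.ext hj
    subst hj0
    simp only [xiTup, twFace, Fin.coe_castSucc, Fin.val_succ, Fin.val_zero]
    split_ifs <;>
      first
        | omega | rfl | (exact absurd ‹False› not_false)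
        | (rw [cpMul_cpOf]; simp [_root_.map_mul]; done)
        | (simp_all; done)
        | (simp_all; rw [cpMul_cpOf]; simp; done)
  · simp only [xiTup, twFace, Fin.coe_castSucc, Fin.val_succ, Fin.val_zero]
    split_ifs <;>
      first
        | omega | rfl | (exact absurd ‹False› not_false)
        | (rw [cpMul_cpOf]; simp; done)
        | (simp_all; done)

lemma xiTup_twCyc (g : G) (m : ℕ) (a : Fin (m + 2) → A) :
    (xiTup k A G act g (twCyc k A G act g a)) = (fun j : Fin (m+1) =>
        if (j : ℕ) = 0 then cpMul k A G act (id (xiTup k A G act g a (Fin.last (m+1)))) (xiTup k A G act g a 0)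
        else xiTup k A G act g a (Fin.castSucc j)) := by
  have key : ∀ x : A, (act g)⁻¹ ((act g) x) = x := fun x => (act g).symm_apply_apply x
  have key2 : ∀ x : A, act g⁻¹ ((act g) x) = x := fun x => by rw [map_inv]; exact key x
  funext j
  rcases eq_or_ne (j : ℕ) 0 with hj | hj
  · have hj0 : j = 0 := Fin.ext hj
    subst hj0
    simp only [xiTup, twCyc, Fin.coe_castSucc, Fin.val_succ, Fin.val_zero, Fin.val_last, id]
    split_ifs <;>
      first
        | omega | rfl | (exact absurd ‹False› not_false)
        | (rw [cpMul_cpOf]; simp [_root_.map_mul, key, key2]; done)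
        | (simp_all; done)
  · simp only [xiTup, twCyc, Fin.coe_castSucc, Fin.val_zero, Fin.val_last]
    split_ifs <;> first | omega | rfl | (exact absurd ‹False› not_false) | (simp_all; done)

/-- For each `g ∈ G`, the map `ξ_g : C_•(A; A_g) → C_•(A ⋊ G)` is a chain map:
on every elementary chain `a`, applying `ξ_g` to the `g`-twisted Hochschild
differential of `a` (including the cyclic boundary term) agrees with the
Hochschild differential of `A ⋊ G` applied to `ξ_g(a)`. -/
theorem xi_chain_map (g : G) (m : ℕ) (a : Fin (m + 2) → A) :
    ((∑ i : Fin (m + 1), ((-1 : ℤ) ^ (i : ℕ)) •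
        tprod k (xiTup k A G act g (twFace A i a)))
      + ((-1 : ℤ) ^ (m + 1)) • tprod k (xiTup k A G act g (twCyc k A G act g a)))
    = tupleD k (cpMul k A G act) id (xiTup k A G act g a) := by
  unfold tupleD
  congr 1
  · refine Finset.sum_congr rfl fun i _ => ?_
    rw [xiTup_twFace]
  · rw [xiTup_twCyc]

end
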